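/- Let d be odd. A nonempty subset S of (ZMod d)^n that contains 2⁻¹(a+b) for every a, b ∈ S (a balanced set) is a coset of a subgroup closed under scalar multiplication; i.e., S is an affine subspace of the ZMod d-module (ZMod d)^n. -/

import Mathlib

open scoped BigOperators
open Finset Matrix
open scoped ComplexOrder

attribute [instance] Classical.propDecidable

/-- The character `χ(t) = exp(2πit/d)` on `ZMod d`. -/
noncomputable def chi (d : ℕ) (t : ZMod d) : ℂ :=
  Complex.exp (2 * Real.pi * Complex.I * (t.val : ℂ) / (d : ℂ))

/-- The standard symplectic form on `(Fin n → R) × (Fin n → R)`. -/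
def symp (R : Type) [CommRing R] (n : ℕ) (v w : (Fin n → R) × (Fin n → R)) : R :=
  (∑ i, v.1 i * w.2 i) - ∑ i, v.2 i * w.1 i

/-- Single-particle Weyl operator `w(p,q) = χ(-2⁻¹pq) ẑ(p) x̂(q)` on `ℂ^d`. -/
noncomputable def weyl1 (d : ℕ) (p q : ZMod d) : Matrix (ZMod d) (ZMod d) ℂ :=
  Matrix.of fun x y => chi d (-(2⁻¹ : ZMod d) * p * q + p * x) * (if y = x - q then 1 else 0)

/-- Multi-particle Weyl operator on `(ℂ^d)^{⊗n}` in coordinates. -/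
noncomputable def weyl (d n : ℕ) (p q : Fin n → ZMod d) :
    Matrix (Fin n → ZMod d) (Fin n → ZMod d) ℂ :=
  Matrix.of fun x y =>
    chi d (-(2⁻¹ : ZMod d) * (∑ i, p i * q i) + ∑ i, p i * x i) * (if y = x - q then 1 else 0)

/-- Weyl operator indexed by a phase space point. -/
noncomputable def weylV (d n : ℕ) (v : (Fin n → ZMod d) × (Fin n → ZMod d)) :
    Matrix (Fin n → ZMod d) (Fin n → ZMod d) ℂ :=
  weyl d n v.1 v.2

/-- Action of the Weyl operator on wave functions:
`(w(p,q)ψ)(y) = χ(-2⁻¹pq + py) ψ(y-q)`. -/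
noncomputable def weylAct (d n : ℕ) (p q : Fin n → ZMod d) (ψ : (Fin n → ZMod d) → ℂ) :
    (Fin n → ZMod d) → ℂ :=
  fun y => chi d (-(2⁻¹ : ZMod d) * (∑ i, p i * q i) + ∑ i, p i * y i) * ψ (y - q)

/-- Wigner function of a pure state `ψ`. -/
noncomputable def wignerPure (d n : ℕ) [NeZero d] (ψ : (Fin n → ZMod d) → ℂ)
    (p q : Fin n → ZMod d) : ℂ :=
  ((d : ℂ) ^ n)⁻¹ * ∑ ξ : Fin n → ZMod d, chi d (-(∑ i, ξ i * p i)) *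
    (starRingEnd ℂ) (ψ (q - (2⁻¹ : ZMod d) • ξ)) * ψ (q + (2⁻¹ : ZMod d) • ξ)

/-- For odd d, a nonempty balanced subset of `(ZMod d)^n` (closed under
midpoints) is an affine subspace. -/
theorem balanced_is_affine (d n : ℕ) (hd : Odd d) (S : Set (Fin n → ZMod d))
    (hne : S.Nonempty)
    (hbal : ∀ a ∈ S, ∀ b ∈ S, (2⁻¹ : ZMod d) • (a + b) ∈ S) :
    ∃ (M : Submodule (ZMod d) (Fin n → ZMod d)) (v : Fin n → ZMod d),
      S = {x | x - v ∈ M} := by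
  haveI : NeZero d := ⟨hd.pos.ne'⟩
  obtain ⟨v, hv⟩ := hne
  set c : ZMod d := (2⁻¹ : ZMod d) with hc
  have h2 : IsUnit (2 : ZMod d) := by
    have := (ZMod.isUnit_iff_coprime 2 d).mpr (Nat.coprime_two_left.mpr hd)
    simpa using this
  have hc2 : c * 2 = 1 := ZMod.inv_mul_of_unit _ h2
  -- T = S - v
  set T : Set (Fin n → ZMod d) := {x | x + v ∈ S} with hT
  have h0 : (0 : Fin n → ZMod d) ∈ T := by simpa [hT] using hv
  have hmid : ∀ a ∈ T, ∀ b ∈ T, c • (a + b) ∈ T := by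
    intro a ha b hb
    have := hbal _ ha _ hb
    have key : c • ((a + v) + (b + v)) = c • (a + b) + v := by
      have : ((a + v) + (b + v)) = (a + b) + (2 : ZMod d) • v := by
        ext i; simp [two_smul]; ring
      rw [this, smul_add, smul_smul, hc2, one_smul]
    simpa [hT, key] using this
  have hhalf : ∀ a ∈ T, c • a ∈ T := by
    intro a ha
    have := hmid a ha 0 h0
    simpa using this
  have hpow : ∀ a ∈ T, ∀ k : ℕ, c ^ k • a ∈ T := by
    intro a ha k
    induction k with
    | zero => simpa using ha
    | succ m ih =>
      rw [pow_succ, mul_comm, mul_smul]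
      exact hhalf _ ih
  have hcu : IsUnit c := IsUnit.of_mul_eq_one _ hc2
  have hadd : ∀ a ∈ T, ∀ b ∈ T, a + b ∈ T := by
    intro a ha b hb
    set N := Fintype.card (ZMod d)ˣ with hN
    have hNpos : 0 < N := Fintype.card_pos
    have hcN : c ^ N = 1 := by
      obtain ⟨u, hu⟩ := hcu
      have : u ^ N = 1 := pow_card_eq_one
      calc c ^ N = ((u ^ N : (ZMod d)ˣ) : ZMod d) := by rw [← hu]; push_cast; ring
        _ = 1 := by rw [this]; simp
    have h1 : c • (a + b) ∈ T := hmid a ha b hb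
    have h2' : c ^ (N - 1) • (c • (a + b)) ∈ T := hpow _ h1 _
    have : c ^ (N - 1) • (c • (a + b)) = a + b := by
      rw [smul_smul, ← pow_succ, Nat.sub_add_cancel hNpos, hcN, one_smul]
    rwa [this] at h2'
  have hnsmul : ∀ a ∈ T, ∀ k : ℕ, k • a ∈ T := by
    intro a ha k
    induction k with
    | zero => simpa using h0
    | succ m ih =>
      rw [succ_nsmul]
      exact hadd _ ih _ ha
  refine ⟨{ carrier := T
            add_mem' := fun {a b} ha hb => hadd a ha b hb
            zero_mem' := h0
            smul_mem' := by
              intro r x hx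
              have : r • x = r.val • x := by
                rw [← Nat.cast_smul_eq_nsmul (ZMod d), ZMod.natCast_val, ZMod.cast_id]
              rw [this]
              exact hnsmul x hx r.val }, v, ?_⟩
  ext x
  simp only [Set.mem_setOf_eq, Submodule.mem_mk, AddSubmonoid.mem_mk, AddSubsemigroup.mem_mk]
  change x ∈ S ↔ (x - v) + v ∈ S
  rw [sub_add_cancel]
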